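/- Let Λ be a finite multiset of vectors in ℝⁿ invariant under all simple reflections of an irreducible Cartan matrix A (of finite type), and suppose α_i and α_j are two long simple roots. Then Σ_{μ∈Λ} μ_i² = Σ_{μ∈Λ} μ_j². -/

import Mathlib

/-- Well-definedness of `x_j(λ)` (Proposition 4.1): for an irreducible finite-type Cartan matrix
`A` realized by linearly independent simple roots `α` in a Euclidean space, a multiset `Λ`
invariant under all simple reflections, and two long simple roots `α_i`, `α_j` (of maximal
length), `∑_{μ∈Λ} μ_i² = ∑_{μ∈Λ} μ_j²`. -/
theorem stmt15 (n : ℕ) (E : Type*) [NormedAddCommGroup E] [InnerProductSpace ℝ E]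
    (α : Fin n → E) (hind : LinearIndependent ℝ α)
    (A : Matrix (Fin n) (Fin n) ℝ)
    (hA : ∀ k l, A k l = 2 * (inner ℝ (α k) (α l) : ℝ) / (inner ℝ (α l) (α l) : ℝ))
    (hint : ∀ k l, ∃ m : ℤ, A k l = (m : ℝ))
    (hneg : ∀ k l, k ≠ l → A k l ≤ 0)
    (hconn : (SimpleGraph.fromRel (fun k l => A k l ≠ 0)).Connected)
    (Λ : Multiset (Fin n → ℝ))
    (hinv : ∀ k : Fin n, Multiset.map (fun μ m => μ m - μ k * A k m) Λ = Λ)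
    (i j : Fin n)
    (hlongi : ∀ k, ‖α k‖ ≤ ‖α i‖) (hlongj : ∀ k, ‖α k‖ ≤ ‖α j‖) :
    (Λ.map (fun μ => μ i ^ 2)).sum = (Λ.map (fun μ => μ j ^ 2)).sum := by
  set S : Fin n → ℝ := fun m => (Λ.map (fun μ => μ m ^ 2)).sum with hSdef
  have hα : ∀ k : Fin n, (0 : ℝ) < (inner ℝ (α k) (α k) : ℝ) := fun k =>
    by rw [real_inner_self_eq_norm_sq]; exact pow_pos (norm_pos_iff.mpr (hind.ne_zero k)) 2
  -- Key reflection identity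
  have key : ∀ k m : Fin n,
      2 * A k m * (Λ.map (fun μ => μ k * μ m)).sum = A k m ^ 2 * S k := by
    intro k m
    have h1 := congrArg (fun s => (Multiset.map (fun μ => μ m ^ 2) s).sum) (hinv k)
    simp only [Multiset.map_map, Function.comp] at h1
    -- pointwise algebraic identity, then split the sums
    have e1 : (Λ.map (fun μ => (μ m - μ k * A k m) ^ 2 + 2 * A k m * (μ k * μ m))).sum
        = (Λ.map (fun μ => μ m ^ 2 + A k m ^ 2 * μ k ^ 2)).sum := by
      congr 1
      exact Multiset.map_congr rfl fun μ _ => by ring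
    rw [Multiset.sum_map_add, Multiset.sum_map_add, Multiset.sum_map_mul_left,
      Multiset.sum_map_mul_left] at e1
    rw [h1] at e1
    linarith
  have edge : ∀ k l : Fin n, (A k l ≠ 0 ∨ A l k ≠ 0) →
      S k * (inner ℝ (α k) (α k) : ℝ) = S l * (inner ℝ (α l) (α l) : ℝ) := by
    intro k l h
    have hip : (inner ℝ (α k) (α l) : ℝ) ≠ 0 := by
      rcases h with h | h
      · intro h0; apply h; rw [hA k l, h0]; ring
      · intro h0; apply h; rw [hA l k, real_inner_comm, h0]; ring
    have hAkl : A k l ≠ 0 := by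
      rw [hA k l]
      exact div_ne_zero (by positivity) (ne_of_gt (hα l))
    have hAlk : A l k ≠ 0 := by
      rw [hA l k]
      refine div_ne_zero ?_ (ne_of_gt (hα k))
      rw [real_inner_comm]; positivity
    have hT : (Λ.map (fun μ => μ l * μ k)).sum = (Λ.map (fun μ => μ k * μ l)).sum := by
      congr 1
      exact Multiset.map_congr rfl fun μ _ => mul_comm _ _
    have h1 := key k l
    have h2 := key l k
    rw [hT] at h2
    -- cancel A from each identity
    have e1 : 2 * (Λ.map (fun μ => μ k * μ l)).sum = A k l * S k :=
      mul_left_cancel₀ hAkl (by linear_combination h1)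
    have e2 : 2 * (Λ.map (fun μ => μ k * μ l)).sum = A l k * S l :=
      mul_left_cancel₀ hAlk (by linear_combination h2)
    have e3 : A k l * S k = A l k * S l := e1 ▸ e2
    rw [hA k l, hA l k, real_inner_comm (α l) (α k)] at e3
    have hb := ne_of_gt (hα l)
    have ha := ne_of_gt (hα k)
    field_simp at e3
    rw [real_inner_comm (α k) (α l)] at e3
    -- cancel the inner product factor
    apply mul_left_cancel₀ hip
    linear_combination e3
  -- constancy along walks
  have main : ∀ (a b : Fin n)
      (w : (SimpleGraph.fromRel (fun k l => A k l ≠ 0)).Walk a b),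
      S a * (inner ℝ (α a) (α a) : ℝ) = S b * (inner ℝ (α b) (α b) : ℝ) := by
    intro a b w
    induction w with
    | nil => rfl
    | cons h p ih =>
      rw [SimpleGraph.fromRel_adj] at h
      exact (edge _ _ h.2).trans ih
  obtain ⟨w⟩ := hconn.preconnected i j
  have hij := main i j w
  have hnorm : ‖α i‖ = ‖α j‖ := le_antisymm (hlongj i) (hlongi j)
  have hinner : (inner ℝ (α i) (α i) : ℝ) = (inner ℝ (α j) (α j) : ℝ) := by
    rw [real_inner_self_eq_norm_mul_norm, real_inner_self_eq_norm_mul_norm, hnorm]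
  rw [hinner] at hij
  exact mul_right_cancel₀ (ne_of_gt (hα j)) hij
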